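/- Let {W^k} be a sequence of row-stochastic S × S matrices such that there exist C₂ > 0, ρ ∈ (0,1), and stochastic vectors ψ^k with ‖W^{ℓ:t} − 1(ψ^t)ᵀ‖₂ ≤ C₂ρ^{ℓ−t} for all ℓ ≥ t ≥ 0, where W^{ℓ:t} = W^ℓ⋯W^t. Then (ψ^{t+1})ᵀ W^t = (ψ^t)ᵀ for all t ≥ 0. -/

import Mathlib

/-- Backward product of matrices: `Wprod W t m = W (t+m-1) * ⋯ * W (t+1) * W t`
(with `m` factors), so that `W^{ℓ:t} = Wprod W t (ℓ - t + 1)` for `ℓ ≥ t`. -/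
def Wprod {S : ℕ} (W : ℕ → Matrix (Fin S) (Fin S) ℝ) (t : ℕ) :
    ℕ → Matrix (Fin S) (Fin S) ℝ
  | 0 => 1
  | m + 1 => W (t + m) * Wprod W t m

/-- The spectral (ℓ₂-operator) norm of a real matrix, via its action on
Euclidean space. -/
noncomputable def l2OpNorm {S : ℕ} (A : Matrix (Fin S) (Fin S) ℝ) : ℝ :=
  ‖LinearMap.toContinuousLinearMap (Matrix.toEuclideanLin A)‖

lemma euclidean_abs_le {S : ℕ} (x : EuclideanSpace ℝ (Fin S)) (i : Fin S) :
    |x i| ≤ ‖x‖ := by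
  rw [EuclideanSpace.norm_eq]
  have h1 : |x i| = Real.sqrt (‖x i‖ ^ 2) := by
    rw [Real.sqrt_sq_eq_abs]; simp
  rw [h1]
  apply Real.sqrt_le_sqrt
  exact Finset.single_le_sum (f := fun k => ‖x k‖ ^ 2) (fun k _ => sq_nonneg _) (Finset.mem_univ i)

lemma entry_le_l2OpNorm {S : ℕ} (A : Matrix (Fin S) (Fin S) ℝ) (i j : Fin S) :
    |A i j| ≤ l2OpNorm A := by
  set L := LinearMap.toContinuousLinearMap (Matrix.toEuclideanLin A)
  set v : EuclideanSpace ℝ (Fin S) := EuclideanSpace.single j (1 : ℝ)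
  have hv : (L v) i = A i j := by
    show (Matrix.toEuclideanLin A v) i = A i j
    rw [Matrix.toEuclideanLin_apply]
    show (Matrix.mulVec A ((WithLp.equiv 2 (Fin S → ℝ)) v)) i = A i j
    have : (WithLp.equiv 2 (Fin S → ℝ)) v = Pi.single j 1 :=
      EuclideanSpace.ofLp_single j 1
    rw [this, Matrix.mulVec_single]
    simp
  calc |A i j| = |(L v) i| := by rw [hv]
    _ ≤ ‖L v‖ := euclidean_abs_le _ _
    _ ≤ ‖L‖ * ‖v‖ := L.le_opNorm v
    _ = l2OpNorm A := by
        have hv1 : ‖v‖ = 1 := by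
          show ‖EuclideanSpace.single j (1:ℝ)‖ = 1
          rw [EuclideanSpace.norm_single]; exact norm_one
        rw [hv1, mul_one]
        rfl

lemma Wprod_split {S : ℕ} (W : ℕ → Matrix (Fin S) (Fin S) ℝ) (t m : ℕ) :
    Wprod W t (m + 1) = Wprod W (t + 1) m * W t := by
  induction m with
  | zero => simp [Wprod]
  | succ m ih =>
      show W (t + (m + 1)) * Wprod W t (m + 1) = _
      rw [ih]
      show _ = W (t + 1 + m) * Wprod W (t + 1) m * W t
      rw [show t + (m + 1) = t + 1 + m by ring, Matrix.mul_assoc]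

/-- if the backward products of the row-stochastic matrices `W^k`
converge geometrically (in spectral norm) to the rank-one matrices `1 (ψ^t)ᵀ`,
then `(ψ^{t+1})ᵀ W^t = (ψ^t)ᵀ` for all `t`. -/
theorem stmt_4 {S : ℕ}
    (W : ℕ → Matrix (Fin S) (Fin S) ℝ)
    (hWnn : ∀ k i j, 0 ≤ W k i j)
    (hWrow : ∀ k i, ∑ j, W k i j = 1)
    (ψ : ℕ → Fin S → ℝ)
    (hψnn : ∀ t i, 0 ≤ ψ t i)
    (hψsum : ∀ t, ∑ i, ψ t i = 1)
    (C₂ ρ : ℝ) (hC₂ : 0 < C₂) (hρ0 : 0 < ρ) (hρ1 : ρ < 1)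
    (hmix : ∀ t ℓ : ℕ, t ≤ ℓ →
      l2OpNorm (Wprod W t (ℓ - t + 1) - Matrix.of fun _ j => ψ t j) ≤
        C₂ * ρ ^ (ℓ - t)) :
    ∀ t, Matrix.vecMul (ψ (t + 1)) (W t) = ψ t := by
  intro t
  funext j
  rcases Nat.eq_zero_or_pos S with hS | hS
  · exact absurd j.2 (by omega)
  obtain ⟨i⟩ : Nonempty (Fin S) := ⟨⟨0, hS⟩⟩
  -- entrywise convergence of Wprod
  have key : ∀ s : ℕ, ∀ k : Fin S,
      Filter.Tendsto (fun n => Wprod W s (n + 1) i k) Filter.atTop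
        (nhds (ψ s k)) := by
    intro s k
    have hb : ∀ n : ℕ, |Wprod W s (n + 1) i k - ψ s k| ≤ C₂ * ρ ^ n := by
      intro n
      have := hmix s (s + n) (Nat.le_add_right _ _)
      rw [Nat.add_sub_cancel_left] at this
      have h2 := entry_le_l2OpNorm
        (Wprod W s (n + 1) - Matrix.of fun _ j => ψ s j) i k
      simp only [Matrix.sub_apply, Matrix.of_apply] at h2
      exact h2.trans this
    have hgeo : Filter.Tendsto (fun n : ℕ => C₂ * ρ ^ n) Filter.atTop (nhds 0) := by
      rw [show (0:ℝ) = C₂ * 0 by ring]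
      exact (tendsto_pow_atTop_nhds_zero_of_lt_one hρ0.le hρ1).const_mul C₂
    have h0 : Filter.Tendsto (fun n => Wprod W s (n + 1) i k - ψ s k)
        Filter.atTop (nhds 0) := by
      apply squeeze_zero_norm (fun n => ?_) hgeo
      simpa using hb n
    have := h0.add_const (ψ s k)
    simpa using this
  -- the product identity entrywise
  have hsplit : ∀ n : ℕ, Wprod W t (n + 2) i j =
      ∑ k, Wprod W (t + 1) (n + 1) i k * W t k j := by
    intro n
    rw [show n + 2 = (n + 1) + 1 from rfl, Wprod_split]
    rfl
  -- LHS limit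
  have hL : Filter.Tendsto (fun n => Wprod W t (n + 2) i j) Filter.atTop
      (nhds (ψ t j)) :=
    (key t j).comp (Filter.tendsto_add_atTop_nat 1)
  -- RHS limit
  have hR : Filter.Tendsto (fun n => ∑ k, Wprod W (t + 1) (n + 1) i k * W t k j)
      Filter.atTop (nhds (∑ k, ψ (t + 1) k * W t k j)) := by
    apply tendsto_finset_sum
    intro k _
    exact (key (t + 1) k).mul_const _
  rw [funext hsplit] at hL
  have := tendsto_nhds_unique hL hR
  rw [Matrix.vecMul, dotProduct]
  exact this.symm ▸ rfl
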